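/- If A ⊆ F_p is sum-free with density α = |A|/p, and δ₁ = |Â(r₁)|/α is the largest normalized nonzero Fourier coefficient magnitude, then α ≤ δ₁/(1 + δ₁). -/

import Mathlib

open Finset

/-- The Fourier coefficient of the indicator function of `A` at `r`. -/
noncomputable def ft {p : ℕ} [NeZero p] (A : Finset (ZMod p)) (r : ZMod p) : ℂ :=
  (p : ℂ)⁻¹ * ∑ x : ZMod p,
    if x ∈ A then Complex.exp (-(2 * Real.pi * Complex.I * ((r * x).val : ℕ) / p)) else 0

private lemma sf_conj_std {p : ℕ} [NeZero p] (y : ZMod p) :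
    (starRingEnd ℂ) (ZMod.stdAddChar y) = ZMod.stdAddChar (-y) := by
  have hne : (ZMod.stdAddChar (N := p)) y ≠ 0 := by
    intro h
    have h2 : ‖(ZMod.stdAddChar (N := p)) y‖ = 1 := by
      rw [ZMod.stdAddChar_apply]; exact Circle.norm_coe _
    rw [h] at h2; simp at h2
  have h1 : ZMod.stdAddChar (-y) * ZMod.stdAddChar y = 1 := by
    rw [← AddChar.map_add_eq_mul]; simp
  have h2 : (starRingEnd ℂ) (ZMod.stdAddChar y) * ZMod.stdAddChar y = 1 := by
    rw [mul_comm, Complex.mul_conj, ← Complex.sq_norm, ZMod.stdAddChar_apply,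
      Circle.norm_coe]
    norm_num
  exact mul_right_cancel₀ hne (h2.trans h1.symm)

private lemma sf_ft_eq {p : ℕ} [NeZero p] (A : Finset (ZMod p)) (r : ZMod p) :
    ft A r = (p : ℂ)⁻¹ * ∑ x ∈ A, ZMod.stdAddChar (-(r * x)) := by
  unfold ft
  congr 1
  rw [Finset.sum_ite_mem, Finset.univ_inter]
  refine Finset.sum_congr rfl fun x _ => ?_
  rw [AddChar.map_neg_eq_inv, ZMod.stdAddChar_apply, ZMod.toCircle_apply,
    ← Complex.exp_neg]

private lemma sf_orth {p : ℕ} [Fact p.Prime] (t : ZMod p) :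
    ∑ r : ZMod p, ZMod.stdAddChar (t * r) = if t = 0 then (p : ℂ) else 0 := by
  split_ifs with h
  · simp only [h, zero_mul, AddChar.map_zero_eq_one, Finset.sum_const, Finset.card_univ,
      ZMod.card, nsmul_eq_mul, mul_one]
  · exact AddChar.sum_eq_zero_of_ne_one (ZMod.isPrimitive_stdAddChar p h)

private lemma sf_triple {α : Type*} (A : Finset α) (f g h : α → ℂ) :
    (∑ a ∈ A, f a) * (∑ b ∈ A, g b) * (∑ c ∈ A, h c)
      = ∑ a ∈ A, ∑ b ∈ A, ∑ c ∈ A, f a * g b * h c := by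
  rw [Finset.sum_mul_sum, Finset.sum_mul]
  refine Finset.sum_congr rfl fun a _ => ?_
  rw [Finset.sum_mul]
  refine Finset.sum_congr rfl fun b _ => ?_
  rw [Finset.mul_sum]

set_option maxHeartbeats 2000000 in
theorem stmt3 {p : ℕ} [Fact p.Prime] (A : Finset (ZMod p))
    (hsf : ∀ a ∈ A, ∀ b ∈ A, a + b ∉ A)
    (α δ₁ : ℝ) (hα : α = (A.card : ℝ) / p) (hαpos : 0 < α)
    (hub : ∀ r : ZMod p, r ≠ 0 → ‖ft A r‖ ≤ δ₁ * α)
    (hex : ∃ r : ZMod p, r ≠ 0 ∧ ‖ft A r‖ = δ₁ * α) :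
    α ≤ δ₁ / (1 + δ₁) := by
  set ψ : AddChar (ZMod p) ℂ := ZMod.stdAddChar with hψ
  have hp0 : (p : ℂ) ≠ 0 := Nat.cast_ne_zero.mpr (NeZero.ne p)
  have hpR : (0 : ℝ) < p := Nat.cast_pos.mpr (Nat.pos_of_ne_zero (NeZero.ne p))
  have hconj : ∀ r : ZMod p, (starRingEnd ℂ) (ft A r)
      = (p : ℂ)⁻¹ * ∑ c ∈ A, ψ (r * c) := by
    intro r
    rw [sf_ft_eq, map_mul, map_sum]
    congr 1
    · simp
    · exact Finset.sum_congr rfl fun c _ => by rw [hψ, sf_conj_std, neg_neg]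
  -- Parseval identity
  have key2 : ∑ r : ZMod p, ft A r * (starRingEnd ℂ) (ft A r) = (A.card : ℂ) / p := by
    have step : ∀ r : ZMod p, ft A r * (starRingEnd ℂ) (ft A r)
        = ((p : ℂ)⁻¹ * (p : ℂ)⁻¹) * ∑ a ∈ A, ∑ c ∈ A, ψ ((c - a) * r) := by
      intro r
      rw [hconj, sf_ft_eq, mul_mul_mul_comm, Finset.sum_mul_sum]
      congr 1
      refine Finset.sum_congr rfl fun a _ => Finset.sum_congr rfl fun c _ => ?_
      rw [← AddChar.map_add_eq_mul]
      congr 1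
      ring
    calc ∑ r : ZMod p, ft A r * (starRingEnd ℂ) (ft A r)
        = ((p : ℂ)⁻¹ * (p : ℂ)⁻¹) * ∑ a ∈ A, ∑ c ∈ A, ∑ r : ZMod p, ψ ((c - a) * r) := by
          rw [Finset.sum_congr rfl fun r _ => step r, ← Finset.mul_sum]
          congr 1
          rw [Finset.sum_comm]
          exact Finset.sum_congr rfl fun a _ => Finset.sum_comm
      _ = ((p : ℂ)⁻¹ * (p : ℂ)⁻¹) * ∑ _a ∈ A, (p : ℂ) := by
          congr 1
          refine Finset.sum_congr rfl fun a ha => ?_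
          rw [Finset.sum_congr rfl fun c _ => sf_orth (c - a)]
          simp only [sub_eq_zero]
          rw [Finset.sum_ite_eq' A a (fun _ => (p : ℂ))]
          simp [ha]
      _ = (A.card : ℂ) / p := by
          rw [Finset.sum_const, nsmul_eq_mul]
          field_simp
  -- sum-free identity
  have key3 : ∑ r : ZMod p, ft A r * ft A r * (starRingEnd ℂ) (ft A r) = 0 := by
    have step : ∀ r : ZMod p, ft A r * ft A r * (starRingEnd ℂ) (ft A r)
        = ((p : ℂ)⁻¹ * (p : ℂ)⁻¹ * (p : ℂ)⁻¹)
          * ∑ a ∈ A, ∑ b ∈ A, ∑ c ∈ A, ψ ((c - a - b) * r) := by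
      intro r
      rw [hconj, sf_ft_eq,
        show ((p:ℂ)⁻¹ * ∑ x ∈ A, ψ (-(r * x))) * ((p:ℂ)⁻¹ * ∑ x ∈ A, ψ (-(r * x)))
            * ((p:ℂ)⁻¹ * ∑ c ∈ A, ψ (r * c))
          = ((p:ℂ)⁻¹ * (p:ℂ)⁻¹ * (p:ℂ)⁻¹)
            * ((∑ x ∈ A, ψ (-(r * x))) * (∑ x ∈ A, ψ (-(r * x))) * (∑ c ∈ A, ψ (r * c)))
          from by ring, sf_triple]
      congr 1
      refine Finset.sum_congr rfl fun a _ => Finset.sum_congr rfl fun b _ =>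
        Finset.sum_congr rfl fun c _ => ?_
      rw [← AddChar.map_add_eq_mul, ← AddChar.map_add_eq_mul]
      congr 1
      ring
    calc ∑ r : ZMod p, ft A r * ft A r * (starRingEnd ℂ) (ft A r)
        = ((p : ℂ)⁻¹ * (p : ℂ)⁻¹ * (p : ℂ)⁻¹)
            * ∑ a ∈ A, ∑ b ∈ A, ∑ c ∈ A, ∑ r : ZMod p, ψ ((c - a - b) * r) := by
          rw [Finset.sum_congr rfl fun r _ => step r, ← Finset.mul_sum]
          congr 1
          rw [Finset.sum_comm]
          refine Finset.sum_congr rfl fun a _ => ?_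
          rw [Finset.sum_comm]
          exact Finset.sum_congr rfl fun b _ => Finset.sum_comm
      _ = 0 := by
          rw [mul_eq_zero]
          right
          refine Finset.sum_eq_zero fun a ha => Finset.sum_eq_zero fun b hb =>
            Finset.sum_eq_zero fun c hc => ?_
          rw [sf_orth]
          have hne : c - a - b ≠ 0 := by
            intro h
            have hc' : c = a + b := by
              have := sub_eq_zero.mp (by rwa [sub_sub] at h)
              linear_combination this
            exact hsf a ha b hb (hc' ▸ hc)
          simp [hne]
  -- value at 0
  have h0 : ft A 0 = ((α : ℝ) : ℂ) := by
    rw [sf_ft_eq]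
    simp only [zero_mul, neg_zero, AddChar.map_zero_eq_one, Finset.sum_const, nsmul_eq_mul,
      mul_one, hα]
    push_cast
    field_simp
  -- real Parseval
  have hS2 : ∑ r : ZMod p, (‖ft A r‖) ^ 2 = α := by
    have hcast : ((∑ r : ZMod p, (‖ft A r‖) ^ 2 : ℝ) : ℂ) = ((α : ℝ) : ℂ) := by
      push_cast
      rw [show ∑ r : ZMod p, ((‖ft A r‖ : ℂ)) ^ 2
          = ∑ r : ZMod p, ft A r * (starRingEnd ℂ) (ft A r) from
        Finset.sum_congr rfl fun r _ => by
          rw [Complex.mul_conj, Complex.normSq_eq_norm_sq]; push_cast; ring]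
      rw [key2, hα]
      push_cast
      ring
    exact_mod_cast hcast
  have habs0 : ‖ft A 0‖ = α := by
    rw [h0, Complex.norm_real, Real.norm_eq_abs, abs_of_pos hαpos]
  have hS2e : ∑ r ∈ Finset.univ.erase (0 : ZMod p), (‖ft A r‖) ^ 2
      = α - α ^ 2 := by
    have h := hS2
    rw [← Finset.add_sum_erase _ _ (Finset.mem_univ (0 : ZMod p)), habs0] at h
    linarith
  -- extract the r = 0 term from key3
  have hsum : ∑ r ∈ Finset.univ.erase (0 : ZMod p), ft A r * ft A r * (starRingEnd ℂ) (ft A r)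
      = -((α ^ 3 : ℝ) : ℂ) := by
    have h := key3
    rw [← Finset.add_sum_erase _ _ (Finset.mem_univ (0 : ZMod p)), h0,
      Complex.conj_ofReal] at h
    push_cast
    linear_combination h
  -- bound each term
  have hterm : ∀ r ∈ Finset.univ.erase (0 : ZMod p),
      ‖ft A r * ft A r * (starRingEnd ℂ) (ft A r)‖
        ≤ δ₁ * α * (‖ft A r‖) ^ 2 := by
    intro r hr
    have hr0 : r ≠ 0 := Finset.ne_of_mem_erase hr
    rw [norm_mul, norm_mul, Complex.norm_conj]
    have h1 := hub r hr0
    have h2 : (0 : ℝ) ≤ ‖ft A r‖ := norm_nonneg _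
    nlinarith
  have hmain : α ^ 3 ≤ δ₁ * α * (α - α ^ 2) := by
    have h1 : α ^ 3 = ‖∑ r ∈ Finset.univ.erase (0 : ZMod p),
        ft A r * ft A r * (starRingEnd ℂ) (ft A r)‖ := by
      rw [hsum, norm_neg, Complex.norm_real, Real.norm_eq_abs,
        abs_of_nonneg (by positivity : (0 : ℝ) ≤ α ^ 3)]
    have h2 := norm_sum_le (Finset.univ.erase (0 : ZMod p))
      (fun r => ft A r * ft A r * (starRingEnd ℂ) (ft A r))
    have h3 := Finset.sum_le_sum hterm
    rw [← Finset.mul_sum, hS2e] at h3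
    linarith
  obtain ⟨r₁, hr₁, he⟩ := hex
  have hδ : 0 ≤ δ₁ := by nlinarith [norm_nonneg (ft A r₁)]
  rw [le_div_iff₀ (by linarith : (0 : ℝ) < 1 + δ₁)]
  nlinarith [mul_pos hαpos hαpos]
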